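/- With notation as above, define the Bott involution $\mathsf B(a)=\mathsf U(a)\mathsf Q\mathsf U(a)^{-1}$ for an invertible Laurent polynomial $a$ over a unital algebra $\mathfrak A$. Then: (a) $\mathsf B(a)^2=1$; (b) $\mathsf B(ac)=\mathsf B(a)$ for any constant unit $c\in\mathfrak A^{\times}$ (viewed as a constant loop); (c) $\mathsf B(a)-\mathsf Q$ has, in each entry position $(n,m)$, an entry expressible as a finite sum of products of coefficients of $a$ and $a^{-1}$, and $\mathsf B$ determines $a$ up to right multiplication by a constant: if $\mathsf B(a)=\mathsf B(a')$ and $a(1)=a'(1)$ then $a=a'$ (where $a(1)=\sum_n a_n$). -/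

import Mathlib

open Function

/-- The sign function `q k = 1` for `k ≥ 0`, `-1` for `k < 0` (diagonal of `𝖰`). -/
def signQ (A : Type*) [Ring A] (k : ℤ) : A := if 0 ≤ k then 1 else -1

/-- The entry `(n,m)` of the Bott involution `𝖡(a) = 𝖴(a) 𝖰 𝖴(a)⁻¹`, where
`a` has coefficients `a : ℤ → A` and `a⁻¹` has coefficients `b : ℤ → A`. -/
noncomputable def bottEntry {A : Type*} [Ring A] (a b : ℤ → A) (n m : ℤ) : A :=
  ∑ᶠ k : ℤ, a (n - k) * (signQ A k * b (k - m))

section BottAux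

variable {A : Type*} [Ring A]

private lemma signQ_sq (k : ℤ) (x : A) : signQ A k * (signQ A k * x) = x := by
  unfold signQ; split_ifs <;> simp

private lemma finsum_eq_sum_Icc (f : ℤ → A) (lo hi : ℤ)
    (h : ∀ k, f k ≠ 0 → lo ≤ k ∧ k ≤ hi) :
    ∑ᶠ k, f k = ∑ k ∈ Finset.Icc lo hi, f k :=
  finsum_eq_sum_of_support_subset f fun k hk =>
    Finset.mem_coe.2 (Finset.mem_Icc.2 (h k hk))

private lemma exists_bound (a b : ℤ → A) (ha : (support a).Finite)
    (hb : (support b).Finite) :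
    ∃ N : ℤ, 0 ≤ N ∧ (∀ j, a j ≠ 0 → -N ≤ j ∧ j ≤ N) ∧
      (∀ j, b j ≠ 0 → -N ≤ j ∧ j ≤ N) := by
  classical
  refine ⟨(((ha.toFinset ∪ hb.toFinset).sup fun x => x.natAbs : ℕ) : ℤ),
    Int.ofNat_nonneg _, ?_, ?_⟩
  · intro j hj
    have hmem : j ∈ ha.toFinset ∪ hb.toFinset :=
      Finset.mem_union_left _ (ha.mem_toFinset.2 hj)
    have h2 : j.natAbs ≤ (ha.toFinset ∪ hb.toFinset).sup fun x => x.natAbs :=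
      Finset.le_sup hmem
    omega
  · intro j hj
    have hmem : j ∈ ha.toFinset ∪ hb.toFinset :=
      Finset.mem_union_right _ (hb.mem_toFinset.2 hj)
    have h2 : j.natAbs ≤ (ha.toFinset ∪ hb.toFinset).sup fun x => x.natAbs :=
      Finset.le_sup hmem
    omega

private lemma bott_term_bound (a b : ℤ → A) (N : ℤ)
    (hNa : ∀ j, a j ≠ 0 → -N ≤ j ∧ j ≤ N) (hNb : ∀ j, b j ≠ 0 → -N ≤ j ∧ j ≤ N)
    (n m k : ℤ) (h : a (n - k) * (signQ A k * b (k - m)) ≠ 0) :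
    n - N ≤ k ∧ k ≤ n + N ∧ m - N ≤ k ∧ k ≤ m + N := by
  have h1 : a (n - k) ≠ 0 := fun e => h (by simp [e])
  have h2 : b (k - m) ≠ 0 := fun e => h (by simp [e])
  have := hNa _ h1
  have := hNb _ h2
  omega

private lemma bott_eq_sum (a b : ℤ → A) (N : ℤ)
    (hNa : ∀ j, a j ≠ 0 → -N ≤ j ∧ j ≤ N) (hNb : ∀ j, b j ≠ 0 → -N ≤ j ∧ j ≤ N)
    (n m lo hi : ℤ) (h1 : lo ≤ n - N) (h2 : n + N ≤ hi) :
    bottEntry a b n m = ∑ k ∈ Finset.Icc lo hi, a (n - k) * (signQ A k * b (k - m)) :=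
  finsum_eq_sum_Icc _ lo hi fun k hk => by
    have := bott_term_bound a b N hNa hNb n m k hk; omega

private lemma bott_eq_zero (a b : ℤ → A) (N : ℤ)
    (hNa : ∀ j, a j ≠ 0 → -N ≤ j ∧ j ≤ N) (hNb : ∀ j, b j ≠ 0 → -N ≤ j ∧ j ≤ N)
    (n m : ℤ) (h : m + 2 * N < n ∨ n + 2 * N < m) :
    bottEntry a b n m = 0 :=
  finsum_eq_zero_of_forall_eq_zero fun k => by
    by_contra hk
    have := bott_term_bound a b N hNa hNb n m k hk; omega

/-- Convolution identity at the level of finset sums. -/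
private lemma conv_ab (a b : ℤ → A) (N : ℤ)
    (hNa : ∀ j, a j ≠ 0 → -N ≤ j ∧ j ≤ N)
    (hab : ∀ k : ℤ, ∑ᶠ j : ℤ, a j * b (k - j) = if k = 0 then (1 : A) else 0)
    (i j lo hi : ℤ) (h1 : lo ≤ i - N) (h2 : i + N ≤ hi) :
    ∑ k ∈ Finset.Icc lo hi, a (i - k) * b (k - j) = if i = j then (1 : A) else 0 := by
  have e1 : ∑ k ∈ Finset.Icc lo hi, a (i - k) * b (k - j) = ∑ᶠ k, a (i - k) * b (k - j) := by
    refine (finsum_eq_sum_Icc _ lo hi fun k hk => ?_).symm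
    have h1' : a (i - k) ≠ 0 := fun e => hk (by simp [e])
    have := hNa _ h1'; omega
  have e2 : ∑ᶠ k : ℤ, a (i - k) * b (k - j) = if i - j = 0 then (1 : A) else 0 := by
    rw [← hab (i - j),
      ← finsum_comp_equiv (Equiv.subLeft i) (f := fun k => a (i - k) * b (k - j))]
    refine finsum_congr fun l => ?_
    simp only [Equiv.subLeft_apply]
    rw [show i - (i - l) = l by ring, show i - l - j = i - j - l by ring]
  rw [e1, e2]
  simp only [sub_eq_zero]

/-- Evaluation at 1 is multiplicative on a convolution inverse pair. -/
private lemma eval_mul_eval (a b : ℤ → A) (N : ℤ) (hN : 0 ≤ N)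
    (hNa : ∀ j, a j ≠ 0 → -N ≤ j ∧ j ≤ N) (hNb : ∀ j, b j ≠ 0 → -N ≤ j ∧ j ≤ N)
    (hab : ∀ k : ℤ, ∑ᶠ j : ℤ, a j * b (k - j) = if k = 0 then (1 : A) else 0) :
    (∑ᶠ n : ℤ, a n) * (∑ᶠ n : ℤ, b n) = 1 := by
  have hS : ∑ᶠ n, a n = ∑ j ∈ Finset.Icc (-N) N, a j :=
    finsum_eq_sum_Icc a _ _ fun j hj => hNa j hj
  have hT : ∀ j ∈ Finset.Icc (-N) N,
      ∑ k ∈ Finset.Icc (-(2 * N)) (2 * N), b (k - j) = ∑ᶠ n, b n := by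
    intro j hj
    rw [Finset.mem_Icc] at hj
    have e1 : ∑ᶠ k : ℤ, b (k - j) = ∑ᶠ n, b n := by
      rw [← finsum_comp_equiv (Equiv.subRight j) (f := b)]
      exact finsum_congr fun k => by simp [Equiv.subRight_apply]
    rw [← e1]
    refine (finsum_eq_sum_Icc _ _ _ fun k hk => ?_).symm
    have := hNb _ hk; omega
  calc (∑ᶠ n, a n) * (∑ᶠ n, b n)
      = ∑ j ∈ Finset.Icc (-N) N, a j * ∑ᶠ n, b n := by rw [hS, Finset.sum_mul]
    _ = ∑ j ∈ Finset.Icc (-N) N, ∑ k ∈ Finset.Icc (-(2 * N)) (2 * N), a j * b (k - j) := by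
        refine Finset.sum_congr rfl fun j hj => ?_
        rw [← hT j hj, Finset.mul_sum]
    _ = ∑ k ∈ Finset.Icc (-(2 * N)) (2 * N), ∑ j ∈ Finset.Icc (-N) N, a j * b (k - j) :=
        Finset.sum_comm
    _ = ∑ k ∈ Finset.Icc (-(2 * N)) (2 * N), (if k = 0 then (1 : A) else 0) := by
        refine Finset.sum_congr rfl fun k hk => ?_
        rw [← hab k]
        refine (finsum_eq_sum_Icc _ _ _ fun j hj => ?_).symm
        have h1' : a j ≠ 0 := fun e => hj (by simp [e])
        have := hNa _ h1'; omega
    _ = 1 := by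
        rw [Finset.sum_ite_eq' (Finset.Icc (-(2 * N)) (2 * N)) 0 (fun _ => (1 : A)),
          if_pos (Finset.mem_Icc.2 (by omega))]

/-- The inversion formula: `2 a(n+1) b(-1-m)` is a difference of Bott entries. -/
private lemma bott_shift (a b : ℤ → A) (ha : (support a).Finite)
    (hb : (support b).Finite) (n m : ℤ) :
    bottEntry a b (n + 1) (m + 1) - bottEntry a b n m = 2 * (a (n + 1) * b (-1 - m)) := by
  have hre : bottEntry a b (n + 1) (m + 1)
      = ∑ᶠ j : ℤ, a (n - j) * (signQ A (j + 1) * b (j - m)) := by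
    rw [bottEntry, ← finsum_comp_equiv (Equiv.addRight 1)
      (f := fun k => a (n + 1 - k) * (signQ A k * b (k - (m + 1))))]
    refine finsum_congr fun j => ?_
    simp only [Equiv.coe_addRight]
    rw [show n + 1 - (j + 1) = n - j by ring, show j + 1 - (m + 1) = j - m by ring]
  have hsa : (support fun j => a (n - j) * (signQ A (j + 1) * b (j - m))).Finite := by
    refine Set.Finite.subset (ha.image fun x => n - x) fun j hj => ?_
    have h1 : a (n - j) ≠ 0 := fun e => hj (by simp [e])
    exact ⟨n - j, h1, by ring⟩
  have hsb : (support fun j => a (n - j) * (signQ A j * b (j - m))).Finite := by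
    refine Set.Finite.subset (ha.image fun x => n - x) fun j hj => ?_
    have h1 : a (n - j) ≠ 0 := fun e => hj (by simp [e])
    exact ⟨n - j, h1, by ring⟩
  rw [hre, bottEntry, ← finsum_sub_distrib hsa hsb]
  rw [finsum_eq_single _ (-1 : ℤ) ?_]
  · have q0 : signQ A ((-1 : ℤ) + 1) = 1 := by unfold signQ; norm_num
    have q1 : signQ A (-1 : ℤ) = -1 := by unfold signQ; norm_num
    rw [show n - (-1 : ℤ) = n + 1 by ring, q0, q1]
    rw [one_mul, neg_one_mul, mul_neg, sub_neg_eq_add, two_mul]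
  · intro x hx
    have : signQ A (x + 1) = signQ A x := by
      unfold signQ
      split_ifs <;> first | rfl | (exfalso; omega)
    rw [this, sub_self]

end BottAux

/-- Properties of the Bott involution `𝖡(a) = 𝖴(a) 𝖰 𝖴(a)⁻¹` for an invertible
Laurent polynomial `a` (coefficients `a`, inverse coefficients `b`):
(a) `𝖡(a)² = 1`; (b) `𝖡(ac) = 𝖡(a)` for a constant unit `c`;
(c) `𝖡(a) - 𝖰` has finitely many nonzero entries, and `𝖡(a)` together with
`a(1)` determines `a`. -/
theorem bott_involution_properties {A : Type*} [Ring A] [Invertible (2 : A)]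
    (a b : ℤ → A)
    (ha : (support a).Finite) (hb : (support b).Finite)
    (hab : ∀ k : ℤ, ∑ᶠ j : ℤ, a j * b (k - j) = if k = 0 then (1 : A) else 0)
    (hba : ∀ k : ℤ, ∑ᶠ j : ℤ, b j * a (k - j) = if k = 0 then (1 : A) else 0) :
    -- (a) `𝖡(a)` is an involution
    (∀ n m : ℤ, ∑ᶠ k : ℤ, bottEntry a b n k * bottEntry a b k m =
      if n = m then (1 : A) else 0) ∧
    -- (b) invariance under right multiplication by a constant unit
    (∀ c : Aˣ, ∀ n m : ℤ,
      bottEntry (fun j => a j * (c : A)) (fun j => ((c⁻¹ : Aˣ) : A) * b j) n m =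
        bottEntry a b n m) ∧
    -- (c) `𝖡(a) - 𝖰` has finitely many nonzero entries
    (Set.Finite (support fun p : ℤ × ℤ =>
      bottEntry a b p.1 p.2 - if p.1 = p.2 then signQ A p.1 else 0)) ∧
    -- (c) uniqueness: `𝖡(a) = 𝖡(a')` and `a(1) = a'(1)` imply `a = a'`
    (∀ a' b' : ℤ → A, (support a').Finite → (support b').Finite →
      (∀ k : ℤ, ∑ᶠ j : ℤ, a' j * b' (k - j) = if k = 0 then (1 : A) else 0) →
      (∀ k : ℤ, ∑ᶠ j : ℤ, b' j * a' (k - j) = if k = 0 then (1 : A) else 0) →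
      (∀ n m : ℤ, bottEntry a b n m = bottEntry a' b' n m) →
      (∑ᶠ n : ℤ, a n) = (∑ᶠ n : ℤ, a' n) →
      a = a') := by
  obtain ⟨N, hN0, hNa, hNb⟩ := exists_bound a b ha hb
  refine ⟨?_, ?_, ?_, ?_⟩
  · -- (a) involution
    intro n m
    set lo : ℤ := min n m - 3 * N - 3 with hlo
    set hi : ℤ := max n m + 3 * N + 3 with hhi
    set lo2 : ℤ := lo - 2 * N - 2 with hlo2
    set hi2 : ℤ := hi + 2 * N + 2 with hhi2
    have hlom : lo ≤ min n m - 3 * N - 3 := le_of_eq hlo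
    have step1 : ∑ᶠ k, bottEntry a b n k * bottEntry a b k m
        = ∑ k ∈ Finset.Icc lo hi, bottEntry a b n k * bottEntry a b k m := by
      refine finsum_eq_sum_Icc _ _ _ fun k hk => ?_
      have h2 : bottEntry a b k m ≠ 0 := fun e => hk (by simp [e])
      by_contra hcon
      rw [not_and_or] at hcon
      exact h2 (bott_eq_zero a b N hNa hNb k m (by omega))
    have hP2 : ∀ k ∈ Finset.Icc lo hi, bottEntry a b n k * bottEntry a b k m
        = ∑ i ∈ Finset.Icc lo2 hi2, ∑ j ∈ Finset.Icc lo2 hi2,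
            (a (n - i) * (signQ A i * b (i - k))) * (a (k - j) * (signQ A j * b (j - m))) := by
      intro k hk
      rw [Finset.mem_Icc] at hk
      rw [bott_eq_sum a b N hNa hNb n k lo2 hi2 (by omega) (by omega),
        bott_eq_sum a b N hNa hNb k m lo2 hi2 (by omega) (by omega),
        Finset.sum_mul_sum]
    have key : ∀ i ∈ Finset.Icc lo2 hi2, ∀ j ∈ Finset.Icc lo2 hi2,
        ∑ k ∈ Finset.Icc lo hi,
          (a (n - i) * (signQ A i * b (i - k))) * (a (k - j) * (signQ A j * b (j - m)))
        = if i = j then a (n - i) * b (i - m) else 0 := by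
      intro i _ j _
      by_cases hai : a (n - i) = 0
      · simp [hai]
      by_cases hbj : b (j - m) = 0
      · have hz : ∀ k ∈ Finset.Icc lo hi,
            (a (n - i) * (signQ A i * b (i - k))) * (a (k - j) * (signQ A j * b (j - m))) = 0 :=
          fun k _ => by simp [hbj]
        rw [Finset.sum_congr rfl hz, Finset.sum_const_zero]
        split_ifs with h
        · subst h; rw [hbj, mul_zero]
        · rfl
      have hi' := hNa _ hai
      have hj' := hNb _ hbj
      have hre : ∀ k ∈ Finset.Icc lo hi,
          (a (n - i) * (signQ A i * b (i - k))) * (a (k - j) * (signQ A j * b (j - m)))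
          = (a (n - i) * signQ A i) * ((b (i - k) * a (k - j)) * (signQ A j * b (j - m))) :=
        fun k _ => by simp only [mul_assoc]
      rw [Finset.sum_congr rfl hre]
      rw [← Finset.mul_sum, ← Finset.sum_mul,
        conv_ab b a N hNb hba i j lo hi (by omega) (by omega)]
      split_ifs with h
      · subst h
        rw [one_mul, mul_assoc, signQ_sq]
      · simp
    rw [step1, Finset.sum_congr rfl hP2, Finset.sum_comm,
      Finset.sum_congr rfl fun i _ => Finset.sum_comm,
      Finset.sum_congr rfl fun i hmi => Finset.sum_congr rfl fun j hmj => key i hmi j hmj,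
      Finset.sum_congr rfl fun i hmi => Finset.sum_ite_eq (Finset.Icc lo2 hi2) i
        (fun _ => a (n - i) * b (i - m)),
      Finset.sum_congr rfl fun i hmi => if_pos hmi]
    exact conv_ab a b N hNa hab n m lo2 hi2 (by omega) (by omega)
  · -- (b) constant units
    intro c n m
    unfold bottEntry
    refine finsum_congr fun k => ?_
    unfold signQ
    split_ifs <;> simp [mul_assoc, Units.mul_inv_cancel_left]
  · -- (c) finiteness
    have hBpos : ∀ n m : ℤ, N ≤ n → bottEntry a b n m = if n = m then (1 : A) else 0 := by
      intro n m hn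
      rw [bott_eq_sum a b N hNa hNb n m (n - N) (n + N) le_rfl le_rfl,
        ← conv_ab a b N hNa hab n m (n - N) (n + N) le_rfl le_rfl]
      refine Finset.sum_congr rfl fun k hk => ?_
      rw [Finset.mem_Icc] at hk
      have hq : signQ A k = 1 := by unfold signQ; rw [if_pos (by omega)]
      rw [hq, one_mul]
    have hBneg : ∀ n m : ℤ, n + N < 0 →
        bottEntry a b n m = -(if n = m then (1 : A) else 0) := by
      intro n m hn
      rw [bott_eq_sum a b N hNa hNb n m (n - N) (n + N) le_rfl le_rfl,
        ← conv_ab a b N hNa hab n m (n - N) (n + N) le_rfl le_rfl, ← Finset.sum_neg_distrib]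
      refine Finset.sum_congr rfl fun k hk => ?_
      rw [Finset.mem_Icc] at hk
      have hq : signQ A k = -1 := by unfold signQ; rw [if_neg (by omega)]
      rw [hq, neg_one_mul, mul_neg]
    have hzero : ∀ n m : ℤ, ¬(-N ≤ n ∧ n ≤ N ∧ -(3 * N) ≤ m ∧ m ≤ 3 * N) →
        bottEntry a b n m - (if n = m then signQ A n else 0) = 0 := by
      intro n m hcon
      by_cases hn1 : N ≤ n
      · rw [hBpos n m hn1]
        have hq : signQ A n = 1 := by unfold signQ; rw [if_pos (by omega)]
        split_ifs with h <;> simp [hq]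
      by_cases hn2 : n + N < 0
      · rw [hBneg n m hn2]
        have hq : signQ A n = -1 := by unfold signQ; rw [if_neg (by omega)]
        split_ifs with h <;> simp [hq]
      · have hm : m + 2 * N < n ∨ n + 2 * N < m := by omega
        rw [bott_eq_zero a b N hNa hNb n m hm, if_neg (by omega), sub_zero]
    refine Set.Finite.subset
      (Finset.Icc (-N) N ×ˢ Finset.Icc (-(3 * N)) (3 * N) : Finset (ℤ × ℤ)).finite_toSet
      fun p hp => ?_
    rcases p with ⟨n, m⟩
    simp only [mem_support] at hp
    by_contra hc
    refine hp (hzero n m fun hcon => hc ?_)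
    simp only [Finset.coe_product, Set.mem_prod, Finset.mem_coe, Finset.mem_Icc]
    exact ⟨⟨hcon.1, hcon.2.1⟩, hcon.2.2.1, hcon.2.2.2⟩
  · -- (d) uniqueness
    intro a' b' ha' hb' hab' hba' hB hsum
    have hprod : ∀ p q : ℤ, a p * b q = a' p * b' q := by
      intro p q
      have h1 := bott_shift a b ha hb (p - 1) (-1 - q)
      have h2 := bott_shift a' b' ha' hb' (p - 1) (-1 - q)
      rw [hB, hB] at h1
      rw [show p - 1 + 1 = p by ring, show (-1 : ℤ) - (-1 - q) = q by ring] at h1 h2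
      have h3 : 2 * (a p * b q) = 2 * (a' p * b' q) := h1.symm.trans h2
      calc a p * b q = ⅟(2 : A) * (2 * (a p * b q)) := by
            rw [← mul_assoc, invOf_mul_self, one_mul]
        _ = ⅟(2 : A) * (2 * (a' p * b' q)) := by rw [h3]
        _ = a' p * b' q := by rw [← mul_assoc, invOf_mul_self, one_mul]
    have hTS : (∑ᶠ n, b n) * (∑ᶠ n, a n) = 1 := eval_mul_eval b a N hN0 hNb hNa hba
    have hbq : ∀ q, b q = b' q := by
      intro q
      have h1 : (∑ᶠ n, a n) * b q = (∑ᶠ n, a n) * b' q := by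
        conv_rhs => rw [hsum, finsum_mul' a' (b' q) ha']
        rw [finsum_mul' a (b q) ha]
        exact finsum_congr fun n => hprod n q
      calc b q = ((∑ᶠ n, b n) * (∑ᶠ n, a n)) * b q := by rw [hTS, one_mul]
        _ = (∑ᶠ n, b n) * ((∑ᶠ n, a n) * b q) := by rw [mul_assoc]
        _ = (∑ᶠ n, b n) * ((∑ᶠ n, a n) * b' q) := by rw [h1]
        _ = ((∑ᶠ n, b n) * (∑ᶠ n, a n)) * b' q := by rw [mul_assoc]
        _ = b' q := by rw [hTS, one_mul]
    have hTT : (∑ᶠ n, b n) = ∑ᶠ n, b' n := finsum_congr hbq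
    funext p
    have h1 : a p * (∑ᶠ n, b n) = a' p * (∑ᶠ n, b n) := by
      rw [mul_finsum' b (a p) hb, hTT, mul_finsum' b' (a' p) hb']
      exact finsum_congr fun n => hprod p n
    calc a p = a p * ((∑ᶠ n, b n) * (∑ᶠ n, a n)) := by rw [hTS, mul_one]
      _ = (a p * (∑ᶠ n, b n)) * (∑ᶠ n, a n) := by rw [mul_assoc]
      _ = (a' p * (∑ᶠ n, b n)) * (∑ᶠ n, a n) := by rw [h1]
      _ = a' p * ((∑ᶠ n, b n) * (∑ᶠ n, a n)) := by rw [mul_assoc]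
      _ = a' p := by rw [hTS, mul_one]
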